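/- Let G be a topological group that is a subgroup of a product Π = ∏_{α∈Γ} G_α of second-countable topological groups, and suppose G is second-countable. Then there exists a countable set A ⊆ Γ such that the restriction of the projection π_A to G is a topological group isomorphism onto its image π_A(G). -/

import Mathlib

/-- A second-countable subgroup `G` of a product of second-countable
(Hausdorff) topological groups admits a countable set `A` of coordinates such that
the projection `π_A` restricted to `G` is a topological group isomorphism onto its
image, i.e. it is an injective inducing homomorphism. -/
theorem exists_countable_coordinates_iso
    {Γ : Type*} (Gf : Γ → Type*) [∀ α, Group (Gf α)] [∀ α, TopologicalSpace (Gf α)]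
    [∀ α, IsTopologicalGroup (Gf α)] [∀ α, SecondCountableTopology (Gf α)]
    [∀ α, T2Space (Gf α)]
    (G : Subgroup (∀ α, Gf α)) [SecondCountableTopology G] :
    ∃ A : Set Γ, A.Countable ∧
      (∀ g h : G, (fun α : A => (g : ∀ α, Gf α) α) = (fun α : A => (h : ∀ α, Gf α) α) →
        g = h) ∧
      Topology.IsInducing (fun (g : G) (α : A) => (g : ∀ α, Gf α) α) ∧
      (∀ g h : G, (fun α : A => ((g * h : G) : ∀ α, Gf α) α) =
        (fun α : A => (g : ∀ α, Gf α) α) * (fun α : A => (h : ∀ α, Gf α) α)) := by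
  classical
  obtain ⟨b, hbc, -, hb⟩ := TopologicalSpace.exists_countable_basis G
  set Cyl : Set (Set G) :=
    {C | ∃ (F : Finset Γ) (V : ∀ α, Set (Gf α)), (∀ α ∈ F, IsOpen (V α)) ∧
      C = ⋂ α ∈ F, (fun g : G => (g : ∀ β, Gf β) α) ⁻¹' (V α)} with hCylDef
  have cyl_open : ∀ C ∈ Cyl, IsOpen C := by
    rintro C ⟨F, V, hV, rfl⟩
    exact isOpen_biInter_finset fun α hα =>
      ((hV α hα).preimage ((continuous_apply α).comp continuous_subtype_val))
  have key : ∀ B ∈ b, ⋃₀ {C | C ∈ Cyl ∧ C ⊆ B} = B := by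
    intro B hB
    apply subset_antisymm
    · exact Set.sUnion_subset fun C hC => hC.2
    · intro x hx
      have hBopen : IsOpen B := hb.isOpen hB
      obtain ⟨U, hU, hUB⟩ := isOpen_induced_iff.mp hBopen
      have hxU : (x : ∀ α, Gf α) ∈ U := by rw [← hUB] at hx; exact hx
      obtain ⟨F, V, hV, hWU⟩ := isOpen_pi_iff.mp hU _ hxU
      refine ⟨Subtype.val ⁻¹' ((F : Set Γ).pi V),
        ⟨⟨F, V, fun α hα => (hV α hα).1, ?_⟩, ?_⟩, ?_⟩
      · ext g
        simp [Set.mem_pi]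
      · intro g hg
        rw [← hUB]
        exact hWU hg
      · exact fun α hα => (hV α hα).2
  have hsub : ∀ B ∈ b, ∃ Tb : Set (Set G), Tb.Countable ∧
      Tb ⊆ {C | C ∈ Cyl ∧ C ⊆ B} ∧ ⋃₀ Tb = B := by
    intro B hB
    obtain ⟨Tb, hTc, hTsub, hTu⟩ := TopologicalSpace.isOpen_sUnion_countable
      {C | C ∈ Cyl ∧ C ⊆ B} (fun C hC => cyl_open C hC.1)
    exact ⟨Tb, hTc, hTsub, by rw [hTu, key B hB]⟩
  choose! T hTc hTsub hTu using hsub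
  have choose_cyl : ∀ C ∈ Cyl, ∃ (F : Finset Γ) (V : ∀ α, Set (Gf α)),
      (∀ α ∈ F, IsOpen (V α)) ∧
      C = ⋂ α ∈ F, (fun g : G => (g : ∀ β, Gf β) α) ⁻¹' (V α) := fun C hC => hC
  choose! Fof Vof hVof hCeq using choose_cyl
  set A : Set Γ := ⋃ B ∈ b, ⋃ C ∈ T B, (Fof C : Set Γ) with hAdef
  have hAc : A.Countable :=
    hbc.biUnion fun B hB => (hTc B hB).biUnion fun C _ => (Fof C).finite_toSet.countable
  set p : G → (∀ α : A, Gf α) := fun g α => (g : ∀ β, Gf β) α with hpdef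
  have hind : Topology.IsInducing p := by
    constructor
    refine le_antisymm (continuous_iff_le_induced.mp
      (continuous_pi fun α => (continuous_apply (α : Γ)).comp continuous_subtype_val)) ?_
    conv_rhs => rw [hb.eq_generateFrom]
    refine @le_generateFrom _ (TopologicalSpace.induced p Pi.topologicalSpace) _
      fun B hB => ?_
    rw [← hTu B hB]
    refine @isOpen_sUnion _ (TopologicalSpace.induced p Pi.topologicalSpace) _
      fun C hC => ?_
    have hCcyl : C ∈ Cyl := (hTsub B hB hC).1
    rw [hCeq C hCcyl]
    refine @isOpen_biInter_finset _ _ (TopologicalSpace.induced p Pi.topologicalSpace) _ _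
      fun α hα => ?_
    have hαA : α ∈ A :=
      Set.mem_biUnion hB (Set.mem_biUnion hC (Finset.mem_coe.mpr hα))
    exact isOpen_induced_iff.mpr
      ⟨(fun x : ∀ β : A, Gf β => x ⟨α, hαA⟩) ⁻¹' (Vof C α),
        (hVof C hCcyl α hα).preimage (continuous_apply (⟨α, hαA⟩ : A)), rfl⟩
  refine ⟨A, hAc, ?_, hind, fun g h => rfl⟩
  intro g h hgh
  have hpgh : p g = p h := hgh
  exact nhds_injective (by rw [hind.nhds_eq_comap, hind.nhds_eq_comap, hpgh])
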